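/- Let n ≥ 10 and let D_n be the root lattice realized inside ℤⁿ (with bilinear form b equal to the negative of the standard Euclidean inner product), with simple roots d_i = e_i − e_{i+1} for 1 ≤ i ≤ n−1 and d_n = e_{n−1} + e_n. Let N be the orthogonal complement in D_n of the sublattice generated by {d_n, d_{n−2}, d_{n−1}, d_{n−3}, d_{n−4}, d_{n−7}, d_{n−6}} (a copy of A₂ ⊕ D₅). Then: (i) N is generated by a = d_n + d_{n−1} + 2(d_{n−2} + ⋯ + d₂) + d₁, by d_{n−6} + 2d_{n−7} + 3d_{n−8}, and by d_{n−9}, …, d₁; (ii) the root sublattice of N (the ℤ‑span of the vectors v ∈ N with b(v,v) = −2) has ℤ‑basis {a, d₁, …, d_{n−9}} and is a copy of the root lattice D_{n−8} (negative definite); (iii) with the glue vector [2]_{D_n} = Σ_{i=1}^{n−2} d_i + ½(d_{n−1} + d_n) ∈ ℚⁿ, one has 2·[2]_{D_n} = a + d₁. -/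

import Mathlib

open Finset

/-- Standard basis vector of `ℤⁿ`. -/
def stdE (n : ℕ) (i : Fin n) : Fin n → ℤ := Pi.single i 1

/-- Simple roots of the root lattice `D_n`: `dRoot n i` is `d_{i+1}` of the paper
(1-based numbering), i.e. `d_i = e_i − e_{i+1}` for `1 ≤ i ≤ n−1` and
`d_n = e_{n−1} + e_n`. -/
def dRoot (n : ℕ) (i : Fin n) : Fin n → ℤ :=
  if h : (i : ℕ) + 1 < n then stdE n i - stdE n ⟨(i : ℕ) + 1, h⟩
  else stdE n ⟨n - 2, by have := i.isLt; omega⟩ + stdE n i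

/-- Negative of the standard Euclidean inner product on `ℤⁿ`. -/
def bD (n : ℕ) (v w : Fin n → ℤ) : ℤ := - ∑ i, v i * w i

/-- The root lattice `D_n`: integer vectors with even coordinate sum. -/
def Dlat (n : ℕ) : Set (Fin n → ℤ) := {v | Even (∑ i, v i)}

lemma stdE_apply (n : ℕ) (i j : Fin n) : stdE n i j = if (j:ℕ) = (i:ℕ) then 1 else 0 := by
  simp [stdE, Pi.single_apply, Fin.ext_iff]

lemma dRoot_apply_lt (n : ℕ) (i j : Fin n) (h : (i:ℕ) + 1 < n) :
    dRoot n i j = (if (j:ℕ) = (i:ℕ) then 1 else 0) - (if (j:ℕ) = (i:ℕ)+1 then 1 else 0) := by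
  rw [dRoot, dif_pos h]
  simp [stdE_apply]

lemma dRoot_apply_ge (n : ℕ) (i j : Fin n) (h : ¬ ((i:ℕ) + 1 < n)) :
    dRoot n i j = (if (j:ℕ) = n-2 then 1 else 0) + (if (j:ℕ) = n-1 then 1 else 0) := by
  have hi : (i:ℕ) = n - 1 := by have := i.isLt; omega
  rw [dRoot, dif_neg h]
  simp [stdE_apply, hi]

/-- sum of an indicator over a filtered universe -/
lemma sum_ind (n : ℕ) (Q : Fin n → Prop) [DecidablePred Q] (c : ℕ) (x : ℤ) :
    ∑ i ∈ univ.filter Q, (if (i:ℕ) = c then x else 0)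
      = if h : c < n then (if Q ⟨c,h⟩ then x else 0) else 0 := by
  split
  · next h =>
    by_cases hQ : Q ⟨c, h⟩
    · rw [Finset.sum_eq_single_of_mem ⟨c, h⟩ (Finset.mem_filter.2 ⟨Finset.mem_univ _, hQ⟩)]
      · simp [hQ]
      · intro b _ hb
        have : (b:ℕ) ≠ c := by simpa [Fin.ext_iff] using hb
        simp [this]
    · rw [if_neg hQ]
      apply Finset.sum_eq_zero
      intro i hi
      have hQi : Q i := (Finset.mem_filter.1 hi).2
      have : (i:ℕ) ≠ c := by
        intro hic
        have hie : i = ⟨c, h⟩ := Fin.ext hic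
        exact hQ (hie ▸ hQi)
      simp [this]
  · next h =>
    apply Finset.sum_eq_zero
    intro i _
    have : (i:ℕ) ≠ c := by have := i.isLt; omega
    simp [this]

lemma sum_ind_univ (n : ℕ) (c : ℕ) (hc : c < n) (x : ℤ) :
    ∑ i : Fin n, (if (i:ℕ) = c then x else 0) = x := by
  have := sum_ind n (fun _ => True) c x
  simpa [hc] using this

lemma sum_smul_dRoot_apply (n : ℕ) (P : ℕ → Prop) [DecidablePred P]
    (hP : ∀ k, P k → k + 1 < n) (c : ℕ → ℤ) (j : Fin n) :
    (∑ i ∈ univ.filter (fun i : Fin n => P (i:ℕ)), c (i:ℕ) • dRoot n i) j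
      = (if P (j:ℕ) then c (j:ℕ) else 0)
        - (if 1 ≤ (j:ℕ) ∧ P ((j:ℕ)-1) then c ((j:ℕ)-1) else 0) := by
  rw [Finset.sum_apply]
  have step : ∀ i ∈ univ.filter (fun i : Fin n => P (i:ℕ)),
      (c (i:ℕ) • dRoot n i) j
        = (if (i:ℕ) = (j:ℕ) then (if P (j:ℕ) then c (j:ℕ) else 0) else 0)
          - (if (i:ℕ) = (j:ℕ)-1 then (if 1 ≤ (j:ℕ) ∧ P ((j:ℕ)-1) then c ((j:ℕ)-1) else 0) else 0) := by
    intro i hi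
    have hPi : P (i:ℕ) := (Finset.mem_filter.1 hi).2
    have hlt : (i:ℕ) + 1 < n := hP _ hPi
    rw [Pi.smul_apply, dRoot_apply_lt n i j hlt]
    have hji : ((j:ℕ) = (i:ℕ)) ∨ ((j:ℕ) = (i:ℕ)+1) ∨ ((j:ℕ) ≠ (i:ℕ) ∧ (j:ℕ) ≠ (i:ℕ)+1) := by omega
    rcases hji with h | h | ⟨h1, h2⟩
    · rw [h]
      simp only [if_pos rfl, hPi, if_true]
      have : (i:ℕ) ≠ (i:ℕ) + 1 := by omega
      rw [if_neg this]
      by_cases h0 : (i:ℕ) = 0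
      · have : ¬ (1 ≤ (i:ℕ) ∧ P ((i:ℕ)-1)) := by rw [h0]; simp
        simp [this]
      · have : (i:ℕ) ≠ (i:ℕ) - 1 := by omega
        simp [this]
    · rw [h]
      have e1 : (i:ℕ) + 1 ≠ (i:ℕ) := by omega
      have e2 : (i:ℕ) ≠ (i:ℕ) + 1 := by omega
      have e3 : (i:ℕ) + 1 - 1 = (i:ℕ) := by omega
      rw [if_neg e1, if_pos rfl, if_neg e2, e3, if_pos rfl,
        if_pos (⟨by omega, hPi⟩ : 1 ≤ (i:ℕ)+1 ∧ P (i:ℕ))]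
      simp
    · have h3 : (i:ℕ) ≠ (j:ℕ) := by omega
      have h1' : (j:ℕ) ≠ (i:ℕ) := by omega
      rw [if_neg h1', if_neg h2, if_neg h3]
      by_cases h4 : (i:ℕ) = (j:ℕ) - 1
      · have hj1 : ¬ (1 ≤ (j:ℕ)) := by omega
        have : ¬ (1 ≤ (j:ℕ) ∧ P ((j:ℕ)-1)) := fun hc => hj1 hc.1
        simp [this]
      · simp [h4]
  rw [Finset.sum_congr rfl step, Finset.sum_sub_distrib,
    sum_ind n _ (j:ℕ) _, sum_ind n _ ((j:ℕ)-1) _]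
  have hj : (j:ℕ) < n := j.isLt
  have hj1 : (j:ℕ) - 1 < n := by omega
  rw [dif_pos hj, dif_pos hj1]
  by_cases hP1 : P (j:ℕ) <;> by_cases hP2 : 1 ≤ (j:ℕ) ∧ P ((j:ℕ)-1) <;>
    simp [hP1, hP2]

lemma sum_dRoot_apply (n : ℕ) (P : ℕ → Prop) [DecidablePred P]
    (hP : ∀ k, P k → k + 1 < n) (j : Fin n) :
    (∑ i ∈ univ.filter (fun i : Fin n => P (i:ℕ)), dRoot n i) j
      = (if P (j:ℕ) then 1 else 0)
        - (if 1 ≤ (j:ℕ) ∧ P ((j:ℕ)-1) then 1 else 0) := by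
  have := sum_smul_dRoot_apply n P hP (fun _ => 1) j
  simpa using this

lemma sum_mul_ind (n : ℕ) (v : Fin n → ℤ) (c : ℕ) (hc : c < n) :
    ∑ i : Fin n, v i * (if (i:ℕ) = c then (1:ℤ) else 0) = v ⟨c, hc⟩ := by
  rw [Finset.sum_eq_single_of_mem ⟨c, hc⟩ (mem_univ _)]
  · simp
  · intro b _ hb
    have : (b:ℕ) ≠ c := by simpa [Fin.ext_iff] using hb
    simp [this]

/-- the explicit coordinates of the root `a = e₀ + e₁`. -/
def aVec (n : ℕ) : Fin n → ℤ :=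
  fun j => (if (j:ℕ) = 0 then 1 else 0) + (if (j:ℕ) = 1 then 1 else 0)

/-- the explicit coordinates of `w = d_{n-7} + 2 d_{n-8} + 3 d_{n-9}` (0-indexed). -/
def wVec (n : ℕ) : Fin n → ℤ :=
  fun j => (if (j:ℕ) = n-9 then 3 else 0) + (if (j:ℕ) = n-8 then -1 else 0)
    + (if (j:ℕ) = n-7 then -1 else 0) + (if (j:ℕ) = n-6 then -1 else 0)

def genD (n : ℕ) : Set (Fin n → ℤ) := {x | ∃ i : Fin n, (i : ℕ) ≤ n - 10 ∧ x = dRoot n i}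

/-- the copy of `D_{n-8}` supported on the first `n-8` coordinates, as a submodule. -/
def MD (n : ℕ) : Submodule ℤ (Fin n → ℤ) where
  carrier := {v | (∀ i : Fin n, n - 8 ≤ (i : ℕ) → v i = 0) ∧ Even (∑ i, v i)}
  zero_mem' := by simp
  add_mem' := by
    rintro x y ⟨hx1, hx2⟩ ⟨hy1, hy2⟩
    refine ⟨fun i hi => by simp [hx1 i hi, hy1 i hi], ?_⟩
    simp only [Pi.add_apply]
    rw [Finset.sum_add_distrib]
    exact hx2.add hy2
  smul_mem' := by
    rintro c x ⟨hx1, hx2⟩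
    refine ⟨fun i hi => by simp [hx1 i hi], ?_⟩
    simp only [Pi.smul_apply, smul_eq_mul, ← Finset.mul_sum]
    exact hx2.mul_left c

/-- tail sum of coordinates from index `k` on. -/
def Tail (n : ℕ) (u : Fin n → ℤ) (k : ℕ) : ℤ :=
  ∑ i ∈ univ.filter (fun i : Fin n => k ≤ (i:ℕ)), u i

/-- coefficients expressing a vector of `MD n` in the generators. -/
def hCoef (n : ℕ) (u : Fin n → ℤ) (t : ℤ) (k : ℕ) : ℤ :=
  if k = 0 then (if h : 0 < n then u ⟨0, h⟩ else 0) - t else -(Tail n u (k+1))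

lemma Tail_step (n : ℕ) (u : Fin n → ℤ) (k : ℕ) (hk : k < n) :
    Tail n u k = u ⟨k, hk⟩ + Tail n u (k+1) := by
  have hset : univ.filter (fun i : Fin n => k ≤ (i:ℕ))
      = insert ⟨k, hk⟩ (univ.filter (fun i : Fin n => k+1 ≤ (i:ℕ))) := by
    ext i
    simp only [mem_filter, mem_univ, true_and, mem_insert, Fin.ext_iff]
    omega
  rw [Tail, hset, Finset.sum_insert (by simp)]
  rfl

lemma Tail_step' (n : ℕ) (u : Fin n → ℤ) (k m : ℕ) (hk : k < n) (hm : m = k + 1) :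
    Tail n u k = u ⟨k, hk⟩ + Tail n u m := by
  rw [hm]
  exact Tail_step n u k hk

lemma Tail_vanish (n : ℕ) (u : Fin n → ℤ)
    (hsupp : ∀ i : Fin n, n - 8 ≤ (i : ℕ) → u i = 0) (k : ℕ) (hk : n - 8 ≤ k) :
    Tail n u k = 0 := by
  apply Finset.sum_eq_zero
  intro i hi
  exact hsupp i (le_trans hk (Finset.mem_filter.1 hi).2)

lemma Tail_zero (n : ℕ) (u : Fin n → ℤ) : Tail n u 0 = ∑ i, u i := by
  rw [Tail]
  congr 1
  apply Finset.filter_true_of_mem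
  intro i _
  exact Nat.zero_le _

lemma mem_span_of_support (n : ℕ) (hn : 10 ≤ n) (u : Fin n → ℤ)
    (hsupp : ∀ i : Fin n, n - 8 ≤ (i : ℕ) → u i = 0) (heven : Even (∑ i, u i)) :
    u ∈ Submodule.span ℤ ({aVec n} ∪ genD n) := by
  obtain ⟨t, ht⟩ := heven
  have claim : u = t • aVec n
      + ∑ i ∈ univ.filter (fun i : Fin n => (i:ℕ) ≤ n - 10),
          hCoef n u t (i:ℕ) • dRoot n i := by
    funext j
    rw [Pi.add_apply, Pi.smul_apply,
      sum_smul_dRoot_apply n (fun k => k ≤ n - 10) (by omega) (hCoef n u t) j]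
    have hj : (j:ℕ) < n := j.isLt
    have hT8 : Tail n u (n-8) = 0 := Tail_vanish n u hsupp _ le_rfl
    have hT0 : Tail n u 0 = t + t := by rw [Tail_zero]; exact ht
    have hu0 : (0:ℕ) < n := by omega
    have c01 : Tail n u 0 = u ⟨0, hu0⟩ + Tail n u 1 := Tail_step n u 0 hu0
    have hcases : (j:ℕ) = 0 ∨ (j:ℕ) = 1 ∨ (2 ≤ (j:ℕ) ∧ (j:ℕ) ≤ n-10)
        ∨ ((j:ℕ) = n-9 ∧ 2 ≤ (j:ℕ)) ∨ n-8 ≤ (j:ℕ) := by omega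
    rcases hcases with h0 | h1 | ⟨h2a, h2b⟩ | ⟨h3a, h3b⟩ | h4
    · have hle : (j:ℕ) ≤ n - 10 := by omega
      have hne : ¬ (1 ≤ (j:ℕ) ∧ (j:ℕ) - 1 ≤ n - 10) := by omega
      rw [if_pos hle, if_neg hne, hCoef, if_pos h0, dif_pos hu0]
      have : j = ⟨0, hu0⟩ := Fin.ext h0
      rw [this]
      simp [aVec]
    · have h1n : (1:ℕ) < n := by omega
      have c12 : Tail n u 1 = u ⟨1, h1n⟩ + Tail n u 2 := Tail_step n u 1 h1n
      have hpos : (1 ≤ (j:ℕ) ∧ (j:ℕ) - 1 ≤ n - 10) := by omega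
      have efirst : (if (j:ℕ) ≤ n - 10 then hCoef n u t (j:ℕ) else 0) = -(Tail n u 2) := by
        by_cases hc : (j:ℕ) ≤ n - 10
        · rw [if_pos hc, hCoef, if_neg (by omega), h1]
        · rw [if_neg hc, show (2:ℕ) = n - 8 by omega, hT8]
          ring
      rw [if_pos hpos, efirst, show (j:ℕ) - 1 = 0 by omega, hCoef, if_pos rfl, dif_pos hu0]
      have hje : j = ⟨1, h1n⟩ := Fin.ext h1
      rw [hje]
      have hav : aVec n ⟨1, h1n⟩ = 1 := by simp [aVec]
      rw [hav, smul_eq_mul]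
      omega
    · have cj : Tail n u (j:ℕ) = u ⟨(j:ℕ), hj⟩ + Tail n u ((j:ℕ)+1) := Tail_step n u _ hj
      rw [if_pos h2b, if_pos (by omega : 1 ≤ (j:ℕ) ∧ (j:ℕ) - 1 ≤ n - 10),
        hCoef, if_neg (by omega), hCoef, if_neg (by omega),
        show (j:ℕ) - 1 + 1 = (j:ℕ) by omega]
      have hav : aVec n j = 0 := by
        simp only [aVec]
        rw [if_neg (by omega), if_neg (by omega)]
        ring
      rw [hav, smul_eq_mul]
      simp only [Fin.eta] at cj
      omega
    · have hn9 : n - 9 < n := by omega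
      have cj : Tail n u (n-9) = u ⟨n-9, hn9⟩ + Tail n u (n-9+1) := Tail_step n u _ hn9
      rw [show n - 9 + 1 = n - 8 by omega, hT8] at cj
      rw [if_neg (by omega : ¬ (j:ℕ) ≤ n - 10),
        if_pos (by omega : 1 ≤ (j:ℕ) ∧ (j:ℕ) - 1 ≤ n - 10),
        hCoef, if_neg (by omega), show (j:ℕ) - 1 + 1 = n - 9 by omega]
      have hje : j = ⟨n-9, hn9⟩ := Fin.ext h3a
      rw [hje]
      have hav : aVec n ⟨n-9, hn9⟩ = 0 := by
        simp only [aVec]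
        rw [if_neg (by omega), if_neg (by omega)]
        ring
      rw [hav, smul_eq_mul]
      omega
    · rw [if_neg (by omega : ¬ (j:ℕ) ≤ n - 10),
        if_neg (by omega : ¬ (1 ≤ (j:ℕ) ∧ (j:ℕ) - 1 ≤ n - 10))]
      have hav : aVec n j = 0 := by
        simp only [aVec]
        rw [if_neg (by omega), if_neg (by omega)]
        ring
      rw [hav, smul_eq_mul, hsupp j h4]
      ring
  rw [claim]
  refine Submodule.add_mem _ ?_ ?_
  · exact Submodule.smul_mem _ _ (Submodule.subset_span (Or.inl rfl))
  · apply Submodule.sum_mem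
    intro i hi
    exact Submodule.smul_mem _ _
      (Submodule.subset_span (Or.inr ⟨i, (Finset.mem_filter.1 hi).2, rfl⟩))

lemma tailsum_dRoot (n : ℕ) (c : ℕ) (hc : c + 1 < n) (k : ℕ) :
    ∑ i ∈ univ.filter (fun i : Fin n => k ≤ (i:ℕ)), dRoot n ⟨c, by omega⟩ i
      = (if k ≤ c then 1 else 0) - (if k ≤ c + 1 then 1 else 0) := by
  have step : ∀ i ∈ univ.filter (fun i : Fin n => k ≤ (i:ℕ)),
      dRoot n ⟨c, by omega⟩ i
        = (if (i:ℕ) = c then (1:ℤ) else 0) - (if (i:ℕ) = c + 1 then (1:ℤ) else 0) := by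
    intro i _
    rw [dRoot_apply_lt n _ i hc]
  rw [Finset.sum_congr rfl step, Finset.sum_sub_distrib, sum_ind, sum_ind,
    dif_pos (by omega : c < n), dif_pos hc]

lemma tailsum_aVec (n : ℕ) (hn : 1 < n) (k : ℕ) :
    ∑ i ∈ univ.filter (fun i : Fin n => k ≤ (i:ℕ)), aVec n i
      = (if k ≤ 0 then 1 else 0) + (if k ≤ 1 then 1 else 0) := by
  rw [show (fun i : Fin n => aVec n i) = fun i : Fin n =>
      ((if (i:ℕ) = 0 then (1:ℤ) else 0) + (if (i:ℕ) = 1 then (1:ℤ) else 0)) from rfl,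
    Finset.sum_add_distrib, sum_ind, sum_ind, dif_pos (by omega : (0:ℕ) < n),
    dif_pos hn]

lemma linIndepAux (n : ℕ) (hn : 9 < n) :
    LinearIndependent ℤ (fun j : Fin (n - 8) =>
      if h : (j : ℕ) < n - 9 then dRoot n ⟨(j : ℕ), by omega⟩ else aVec n) := by
  rw [Fintype.linearIndependent_iff]
  intro g hg
  set F : Fin (n-8) → (Fin n → ℤ) := fun j =>
    if h : (j : ℕ) < n - 9 then dRoot n ⟨(j : ℕ), by omega⟩ else aVec n with hF
  have hg' : ∑ j : Fin (n-8), g j • F j = 0 := hg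
  have hco : ∀ i : Fin n, ∑ j, g j * (F j i) = 0 := by
    intro i
    have h1 := congrFun hg' i
    rw [Finset.sum_apply] at h1
    simpa using h1
  have hkey : ∀ k : ℕ,
      ∑ j : Fin (n-8), g j * (∑ i ∈ univ.filter (fun i : Fin n => k ≤ (i:ℕ)), F j i) = 0 := by
    intro k
    have h0 : ∑ i ∈ univ.filter (fun i : Fin n => k ≤ (i:ℕ)), ∑ j, g j * F j i = 0 :=
      Finset.sum_eq_zero (fun i _ => hco i)
    rw [Finset.sum_comm] at h0
    simpa [← Finset.mul_sum] using h0
  have hFd : ∀ (j : Fin (n-8)) (h : (j:ℕ) < n - 9) (k : ℕ),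
      (∑ i ∈ univ.filter (fun i : Fin n => k ≤ (i:ℕ)), F j i)
        = (if k ≤ (j:ℕ) then 1 else 0) - (if k ≤ (j:ℕ) + 1 then 1 else 0) := by
    intro j h k
    have hFj : F j = dRoot n ⟨(j:ℕ), by omega⟩ := dif_pos h
    rw [hFj]
    exact tailsum_dRoot n (j:ℕ) (by omega) k
  have hFa : ∀ (j : Fin (n-8)) (h : ¬ ((j:ℕ) < n - 9)) (k : ℕ),
      (∑ i ∈ univ.filter (fun i : Fin n => k ≤ (i:ℕ)), F j i)
        = (if k ≤ 0 then 1 else 0) + (if k ≤ 1 then 1 else 0) := by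
    intro j h k
    have hFj : F j = aVec n := dif_neg h
    rw [hFj]
    exact tailsum_aVec n (by omega) k
  have hc0 : 0 < n - 8 := by omega
  have hc9 : n - 9 < n - 8 := by omega
  -- (u1): interior coefficients vanish
  have u1 : ∀ j0 : Fin (n-8), 1 ≤ (j0:ℕ) → (j0:ℕ) ≤ n - 10 → g j0 = 0 := by
    intro j0 h1 h2
    have hk := hkey ((j0:ℕ) + 1)
    have step : ∀ j : Fin (n-8),
        g j * (∑ i ∈ univ.filter (fun i : Fin n => (j0:ℕ)+1 ≤ (i:ℕ)), F j i)
          = -(g j * (if (j:ℕ) = (j0:ℕ) then 1 else 0)) := by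
      intro j
      have hjl := j.isLt
      by_cases h : (j:ℕ) < n - 9
      · rw [hFd j h]
        split_ifs <;> first | ring1 | (exfalso; omega)
      · rw [hFa j h]
        split_ifs <;> first | ring1 | (exfalso; omega)
    rw [Finset.sum_congr rfl (fun j _ => step j), Finset.sum_neg_distrib,
      neg_eq_zero, sum_mul_ind (n-8) g (j0:ℕ) j0.isLt] at hk
    simpa using hk
  -- (u2): coefficient of `a` vanishes (total sum)
  have u2 : ∀ j : Fin (n-8), (j:ℕ) = n - 9 → g j = 0 := by
    intro j0 hj0
    have hk := hkey 0
    have step : ∀ j : Fin (n-8),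
        g j * (∑ i ∈ univ.filter (fun i : Fin n => 0 ≤ (i:ℕ)), F j i)
          = (g j * (if (j:ℕ) = n-9 then 1 else 0)) * 2 := by
      intro j
      have hjl := j.isLt
      by_cases h : (j:ℕ) < n - 9
      · rw [hFd j h]
        split_ifs <;> first | ring1 | (exfalso; omega)
      · rw [hFa j h]
        split_ifs <;> first | ring1 | (exfalso; omega)
    rw [Finset.sum_congr rfl (fun j _ => step j), ← Finset.sum_mul,
      sum_mul_ind (n-8) g (n-9) hc9] at hk
    have hje : j0 = ⟨n-9, hc9⟩ := Fin.ext hj0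
    rw [hje]
    omega
  -- (u3): first coefficient vanishes
  have u3 : ∀ j : Fin (n-8), (j:ℕ) = 0 → g j = 0 := by
    intro j0 hj0
    have hk := hkey 1
    have step : ∀ j : Fin (n-8),
        g j * (∑ i ∈ univ.filter (fun i : Fin n => 1 ≤ (i:ℕ)), F j i)
          = -(g j * (if (j:ℕ) = 0 then 1 else 0)) + g j * (if (j:ℕ) = n-9 then 1 else 0) := by
      intro j
      have hjl := j.isLt
      by_cases h : (j:ℕ) < n - 9
      · rw [hFd j h]
        split_ifs <;> first | ring1 | (exfalso; omega)
      · rw [hFa j h]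
        split_ifs <;> first | ring1 | (exfalso; omega)
    rw [Finset.sum_congr rfl (fun j _ => step j), Finset.sum_add_distrib,
      Finset.sum_neg_distrib, sum_mul_ind (n-8) g 0 hc0,
      sum_mul_ind (n-8) g (n-9) hc9] at hk
    have h9 : g ⟨n-9, hc9⟩ = 0 := u2 _ rfl
    have hje : j0 = ⟨0, hc0⟩ := Fin.ext hj0
    rw [hje]
    omega
  intro j
  have hjl := j.isLt
  have : (j:ℕ) = 0 ∨ (1 ≤ (j:ℕ) ∧ (j:ℕ) ≤ n - 10) ∨ (j:ℕ) = n - 9 := by omega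
  rcases this with h | ⟨h1, h2⟩ | h
  · exact u3 j h
  · exact u1 j h1 h2
  · exact u2 j h

/-- coordinate of `v` at natural index `k` (0 out of range). -/
def vAt (n : ℕ) (v : Fin n → ℤ) (k : ℕ) : ℤ := if h : k < n then v ⟨k, h⟩ else 0

lemma vAt_mk (n : ℕ) (v : Fin n → ℤ) (k : ℕ) (h : k < n) : v ⟨k, h⟩ = vAt n v k := by
  unfold vAt
  rw [dif_pos h]

lemma vAt_coe (n : ℕ) (v : Fin n → ℤ) (i : Fin n) : v i = vAt n v (i:ℕ) := by
  unfold vAt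
  rw [dif_pos i.isLt, Fin.eta]

/-- the orthogonal complement `N`, described explicitly, as a submodule. -/
def Nsub (n : ℕ) : Submodule ℤ (Fin n → ℤ) where
  carrier := {v | (∀ i : Fin n, n - 5 ≤ (i:ℕ) → v i = 0)
    ∧ (∀ i : Fin n, n - 8 ≤ (i:ℕ) → (i:ℕ) ≤ n - 6 → v i = vAt n v (n-8))
    ∧ Even (∑ i, v i)}
  zero_mem' := by
    refine ⟨fun i _ => rfl, fun i _ _ => ?_, by simp⟩
    unfold vAt
    split <;> rfl
  add_mem' := by
    rintro x y ⟨hx1, hx2, hx3⟩ ⟨hy1, hy2, hy3⟩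
    refine ⟨fun i hi => by simp [hx1 i hi, hy1 i hi], fun i h1 h2 => ?_, ?_⟩
    · have ex := hx2 i h1 h2
      have ey := hy2 i h1 h2
      unfold vAt at *
      split <;> simp_all
    · simp only [Pi.add_apply]
      rw [Finset.sum_add_distrib]
      exact hx3.add hy3
  smul_mem' := by
    rintro c x ⟨hx1, hx2, hx3⟩
    refine ⟨fun i hi => by simp [hx1 i hi], fun i h1 h2 => ?_, ?_⟩
    · have ex := hx2 i h1 h2
      unfold vAt at *
      split <;> simp_all
    · simp only [Pi.smul_apply, smul_eq_mul, ← Finset.mul_sum]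
      exact hx3.mul_left c

lemma bD_dRoot (n : ℕ) (v : Fin n → ℤ) (c : ℕ) (hc : c + 1 < n) :
    bD n v (dRoot n ⟨c, by omega⟩) = vAt n v (c+1) - vAt n v c := by
  unfold bD
  have step : ∀ i : Fin n, v i * dRoot n ⟨c, by omega⟩ i
      = v i * (if (i:ℕ) = c then 1 else 0) - v i * (if (i:ℕ) = c+1 then 1 else 0) := by
    intro i
    rw [dRoot_apply_lt n _ i hc]
    ring
  rw [Finset.sum_congr rfl (fun i _ => step i), Finset.sum_sub_distrib,
    sum_mul_ind n v c (by omega), sum_mul_ind n v (c+1) hc,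
    vAt_mk n v c (by omega), vAt_mk n v (c+1) hc]
  ring

lemma bD_dRoot_top (n : ℕ) (v : Fin n → ℤ) (hn : 2 ≤ n) :
    bD n v (dRoot n ⟨n-1, by omega⟩) = -(vAt n v (n-2) + vAt n v (n-1)) := by
  unfold bD
  have step : ∀ i : Fin n, v i * dRoot n ⟨n-1, by omega⟩ i
      = v i * (if (i:ℕ) = n-2 then 1 else 0) + v i * (if (i:ℕ) = n-1 then 1 else 0) := by
    intro i
    rw [dRoot_apply_ge n _ i (show ¬ (n-1+1 < n) by omega)]
    ring
  rw [Finset.sum_congr rfl (fun i _ => step i), Finset.sum_add_distrib,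
    sum_mul_ind n v (n-2) (by omega), sum_mul_ind n v (n-1) (by omega),
    vAt_mk n v (n-2) (by omega), vAt_mk n v (n-1) (by omega)]

lemma N_mem_iff (n : ℕ) (hn : 9 < n) (v : Fin n → ℤ) :
    (v ∈ Dlat n ∧ ∀ s ∈ ({dRoot n ⟨n - 1, by omega⟩, dRoot n ⟨n - 3, by omega⟩,
        dRoot n ⟨n - 2, by omega⟩, dRoot n ⟨n - 4, by omega⟩, dRoot n ⟨n - 5, by omega⟩,
        dRoot n ⟨n - 8, by omega⟩, dRoot n ⟨n - 7, by omega⟩} : Set (Fin n → ℤ)),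
      bD n v s = 0)
    ↔ v ∈ Nsub n := by
  simp only [Set.mem_insert_iff, Set.mem_singleton_iff, forall_eq_or_imp, forall_eq]
  rw [bD_dRoot_top n v (by omega),
    bD_dRoot n v (n-3) (by omega), bD_dRoot n v (n-2) (by omega),
    bD_dRoot n v (n-4) (by omega), bD_dRoot n v (n-5) (by omega),
    bD_dRoot n v (n-8) (by omega), bD_dRoot n v (n-7) (by omega),
    show n-3+1 = n-2 by omega, show n-2+1 = n-1 by omega,
    show n-4+1 = n-3 by omega, show n-5+1 = n-4 by omega,
    show n-8+1 = n-7 by omega, show n-7+1 = n-6 by omega]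
  constructor
  · rintro ⟨heven, e1, e2, e3, e4, e5, e6, e7⟩
    have hv : ∀ k, n - 5 ≤ k → vAt n v k = 0 := by
      intro k h5
      by_cases hk : k < n
      · rcases (by omega : k = n-5 ∨ k = n-4 ∨ k = n-3 ∨ k = n-2 ∨ k = n-1) with
          h|h|h|h|h <;> rw [h] <;> omega
      · unfold vAt
        rw [dif_neg hk]
    refine ⟨?_, ?_, heven⟩
    · intro i hi
      rw [vAt_coe n v i]
      exact hv _ hi
    · intro i h1 h2
      rw [vAt_coe n v i]
      rcases (by omega : (i:ℕ) = n-8 ∨ (i:ℕ) = n-7 ∨ (i:ℕ) = n-6) with h|h|h <;>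
        rw [h] <;> omega
  · rintro ⟨h1, h2, h3⟩
    have hz : ∀ k, n - 5 ≤ k → k < n → vAt n v k = 0 := by
      intro k h5 hk
      rw [← vAt_mk n v k hk]
      exact h1 ⟨k, hk⟩ h5
    have hq : ∀ k, n - 8 ≤ k → k ≤ n - 6 → vAt n v k = vAt n v (n-8) := by
      intro k h8 h6
      rw [← vAt_mk n v k (by omega)]
      exact h2 ⟨k, by omega⟩ h8 h6
    have z1 := hz (n-1) (by omega) (by omega)
    have z2 := hz (n-2) (by omega) (by omega)
    have z3 := hz (n-3) (by omega) (by omega)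
    have z4 := hz (n-4) (by omega) (by omega)
    have z5 := hz (n-5) (by omega) (by omega)
    have q7 := hq (n-7) (by omega) (by omega)
    have q6 := hq (n-6) (by omega) (by omega)
    exact ⟨h3, by omega, by omega, by omega, by omega, by omega, by omega, by omega⟩

lemma aExpr (n : ℕ) (hn : 9 < n) :
    dRoot n ⟨n - 1, by omega⟩ + dRoot n ⟨n - 2, by omega⟩
      + (2 : ℤ) • (∑ i ∈ univ.filter (fun i : Fin n => 1 ≤ (i : ℕ) ∧ (i : ℕ) ≤ n - 3),
          dRoot n i)
      + dRoot n ⟨0, by omega⟩ = aVec n := by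
  funext j
  have hj := j.isLt
  have hsum := sum_dRoot_apply n (fun k => 1 ≤ k ∧ k ≤ n-3) (by omega) j
  simp only [Pi.add_apply, Pi.smul_apply, smul_eq_mul]
  rw [dRoot_apply_ge n _ j (show ¬ (n-1+1 < n) by omega),
    dRoot_apply_lt n _ j (show n-2+1 < n by omega),
    dRoot_apply_lt n _ j (show 0+1 < n by omega), hsum]
  simp only [aVec]
  split_ifs <;> omega

lemma wExpr (n : ℕ) (hn : 9 < n) :
    dRoot n ⟨n - 7, by omega⟩ + (2 : ℤ) • dRoot n ⟨n - 8, by omega⟩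
      + (3 : ℤ) • dRoot n ⟨n - 9, by omega⟩ = wVec n := by
  funext j
  have hj := j.isLt
  simp only [Pi.add_apply, Pi.smul_apply, smul_eq_mul]
  rw [dRoot_apply_lt n _ j (show n-7+1 < n by omega),
    dRoot_apply_lt n _ j (show n-8+1 < n by omega),
    dRoot_apply_lt n _ j (show n-9+1 < n by omega)]
  simp only [wVec]
  split_ifs <;> omega

lemma sum_aVec (n : ℕ) (hn : 10 ≤ n) : ∑ i, aVec n i = 2 := by
  unfold aVec
  rw [Finset.sum_add_distrib, sum_ind_univ n 0 (by omega), sum_ind_univ n 1 (by omega)]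
  norm_num

lemma sum_wVec (n : ℕ) (hn : 10 ≤ n) : ∑ i, wVec n i = 0 := by
  unfold wVec
  rw [Finset.sum_add_distrib, Finset.sum_add_distrib, Finset.sum_add_distrib,
    sum_ind_univ n (n-9) (by omega), sum_ind_univ n (n-8) (by omega),
    sum_ind_univ n (n-7) (by omega), sum_ind_univ n (n-6) (by omega)]
  ring

lemma sum_dRoot_lt (n : ℕ) (i : Fin n) (hi : (i:ℕ) + 1 < n) : ∑ j, dRoot n i j = 0 := by
  have step : ∀ j : Fin n, dRoot n i j
      = (if (j:ℕ) = (i:ℕ) then (1:ℤ) else 0) - (if (j:ℕ) = (i:ℕ)+1 then (1:ℤ) else 0) :=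
    fun j => dRoot_apply_lt n i j hi
  rw [Finset.sum_congr rfl (fun j _ => step j), Finset.sum_sub_distrib,
    sum_ind_univ n (i:ℕ) i.isLt, sum_ind_univ n ((i:ℕ)+1) hi]
  ring

lemma bD_aVec_self (n : ℕ) (hn : 10 ≤ n) : bD n (aVec n) (aVec n) = -2 := by
  unfold bD
  have step : ∀ i : Fin n, aVec n i * aVec n i
      = (if (i:ℕ) = 0 then (1:ℤ) else 0) + (if (i:ℕ) = 1 then (1:ℤ) else 0) := by
    intro i
    simp only [aVec]
    split_ifs <;> first | omega | norm_num
  rw [Finset.sum_congr rfl (fun i _ => step i), Finset.sum_add_distrib,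
    sum_ind_univ n 0 (by omega), sum_ind_univ n 1 (by omega)]
  norm_num

lemma bD_dRoot_self (n : ℕ) (i : Fin n) (hi : (i:ℕ) + 1 < n) :
    bD n (dRoot n i) (dRoot n i) = -2 := by
  unfold bD
  have step : ∀ j : Fin n, dRoot n i j * dRoot n i j
      = (if (j:ℕ) = (i:ℕ) then (1:ℤ) else 0) + (if (j:ℕ) = (i:ℕ)+1 then (1:ℤ) else 0) := by
    intro j
    rw [dRoot_apply_lt n i j hi]
    split_ifs <;> first | omega | norm_num
  rw [Finset.sum_congr rfl (fun j _ => step j), Finset.sum_add_distrib,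
    sum_ind_univ n (i:ℕ) i.isLt, sum_ind_univ n ((i:ℕ)+1) hi]
  norm_num

lemma aVec_mem_MD (n : ℕ) (hn : 10 ≤ n) : aVec n ∈ MD n := by
  refine ⟨fun i hi => ?_, ?_⟩
  · simp only [aVec]
    rw [if_neg (by omega), if_neg (by omega)]
    ring
  · rw [sum_aVec n hn]
    decide

lemma dRoot_mem_MD (n : ℕ) (hn : 10 ≤ n) (i : Fin n) (hi : (i:ℕ) ≤ n - 10) :
    dRoot n i ∈ MD n := by
  refine ⟨fun j hj => ?_, ?_⟩
  · rw [dRoot_apply_lt n i j (by omega), if_neg (by omega), if_neg (by omega)]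
    ring
  · rw [sum_dRoot_lt n i (by omega)]
    decide

lemma MD_le_Nsub (n : ℕ) (hn : 10 ≤ n) : MD n ≤ Nsub n := by
  rintro v ⟨h1, h2⟩
  refine ⟨fun i hi => h1 i (by omega), fun i hi _ => ?_, h2⟩
  rw [h1 i hi]
  have h0 := h1 ⟨n-8, (show n-8 < n by omega)⟩ (le_refl (n-8))
  unfold vAt
  rw [dif_pos (show n-8 < n by omega), h0]

lemma span_MD (n : ℕ) (hn : 10 ≤ n) :
    Submodule.span ℤ ({aVec n} ∪ genD n) = MD n := by
  apply le_antisymm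
  · rw [Submodule.span_le]
    rintro x (hx | ⟨i, hi, rfl⟩)
    · rw [Set.mem_singleton_iff] at hx
      rw [hx]
      exact aVec_mem_MD n hn
    · exact dRoot_mem_MD n hn i hi
  · intro u hu
    obtain ⟨h1, h2⟩ := hu
    exact mem_span_of_support n hn u h1 h2

lemma wVec_val (n : ℕ) (hn : 10 ≤ n) (i : Fin n) (h1 : n - 8 ≤ (i:ℕ)) (h2 : (i:ℕ) ≤ n - 6) :
    wVec n i = -1 := by
  simp only [wVec]
  split_ifs <;> omega

lemma wVec_zero (n : ℕ) (hn : 10 ≤ n) (i : Fin n) (h1 : n - 5 ≤ (i:ℕ)) :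
    wVec n i = 0 := by
  have := i.isLt
  simp only [wVec]
  split_ifs <;> omega

lemma wVec_mem_Nsub (n : ℕ) (hn : 10 ≤ n) : wVec n ∈ Nsub n := by
  refine ⟨fun i hi => wVec_zero n hn i hi, fun i h1 h2 => ?_, ?_⟩
  · rw [wVec_val n hn i h1 h2]
    unfold vAt
    rw [dif_pos (show n-8 < n by omega),
      wVec_val n hn ⟨n-8, by omega⟩ (le_refl (n-8)) (show n-8 ≤ n-6 by omega)]
  · rw [sum_wVec n hn]
    exact Even.zero

lemma bD_self_neg (n : ℕ) (v : Fin n → ℤ) (hv : v ≠ 0) : bD n v v < 0 := by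
  obtain ⟨j, hj⟩ : ∃ j, v j ≠ 0 := by
    by_contra h
    push_neg at h
    exact hv (funext fun j => h j)
  have h1 : 0 < v j * v j := mul_self_pos.2 hj
  have h2 : v j * v j ≤ ∑ i, v i * v i :=
    Finset.single_le_sum (fun i _ => mul_self_nonneg (v i)) (Finset.mem_univ j)
  unfold bD
  linarith

set_option maxHeartbeats 1000000 in
lemma span_roots (n : ℕ) (hn : 10 ≤ n) :
    Submodule.span ℤ {v : Fin n → ℤ | v ∈ (Nsub n : Set (Fin n → ℤ)) ∧ bD n v v = -2}
      = Submodule.span ℤ ({aVec n} ∪ genD n) := by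
  apply le_antisymm
  · rw [Submodule.span_le]
    rintro v ⟨hvN, hv2⟩
    obtain ⟨h1, h2, h3⟩ := hvN
    have hsum2 : ∑ i, v i * v i = 2 := by
      unfold bD at hv2
      omega
    have p8 : n - 8 < n := by omega
    have p7 : n - 7 < n := by omega
    have p6 : n - 6 < n := by omega
    have hc8 : v ⟨n-8, p8⟩ = vAt n v (n-8) := vAt_mk n v (n-8) p8
    have hc7 : v ⟨n-7, p7⟩ = vAt n v (n-8) :=
      h2 ⟨n-7, p7⟩ (show n-8 ≤ n-7 by omega) (show n-7 ≤ n-6 by omega)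
    have hc6 : v ⟨n-6, p6⟩ = vAt n v (n-8) :=
      h2 ⟨n-6, p6⟩ (show n-8 ≤ n-6 by omega) (le_refl (n-6))
    have hTle : Tail n (fun i => v i * v i) (n-8) ≤ ∑ i, v i * v i := by
      unfold Tail
      exact Finset.sum_le_sum_of_subset_of_nonneg (Finset.filter_subset _ _)
        (fun i _ _ => mul_self_nonneg _)
    have hT5 : Tail n (fun i => v i * v i) (n-5) = 0 := by
      apply Finset.sum_eq_zero
      intro i hi
      rw [h1 i (Finset.mem_filter.1 hi).2]
      ring
    have t8 := Tail_step' n (fun i => v i * v i) (n-8) (n-7) p8 (by omega)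
    have t7 := Tail_step' n (fun i => v i * v i) (n-7) (n-6) p7 (by omega)
    have t6 := Tail_step' n (fun i => v i * v i) (n-6) (n-5) p6 (by omega)
    rw [hc8] at t8
    rw [hc7] at t7
    rw [hc6, hT5] at t6
    have hcc : vAt n v (n-8) = 0 := by
      by_contra hne
      have hpos : (0:ℤ) + 1 ≤ vAt n v (n-8) * vAt n v (n-8) :=
        Int.lt_iff_add_one_le.mp (mul_self_pos.2 hne)
      linarith [hTle, hsum2, t8, t7, t6]
    have hz : ∀ i : Fin n, n - 8 ≤ (i:ℕ) → v i = 0 := by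
      intro i hi
      by_cases h5 : n - 5 ≤ (i:ℕ)
      · exact h1 i h5
      · rw [h2 i hi (by omega), hcc]
    exact mem_span_of_support n hn v hz h3
  · rw [Submodule.span_le]
    rintro x (hx | ⟨i, hi, rfl⟩)
    · rw [Set.mem_singleton_iff] at hx
      rw [hx]
      exact Submodule.subset_span ⟨MD_le_Nsub n hn (aVec_mem_MD n hn), bD_aVec_self n hn⟩
    · exact Submodule.subset_span
        ⟨MD_le_Nsub n hn (dRoot_mem_MD n hn i hi), bD_dRoot_self n i (by omega)⟩

lemma glueExpr (n : ℕ) (hn : 9 < n) :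
    (2 : ℚ) • ((∑ i ∈ univ.filter (fun i : Fin n => (i : ℕ) ≤ n - 3),
          fun j => ((dRoot n i j : ℤ) : ℚ))
        + (1 / 2 : ℚ) • ((fun j => ((dRoot n ⟨n - 2, by omega⟩ j : ℤ) : ℚ))
            + fun j => ((dRoot n ⟨n - 1, by omega⟩ j : ℤ) : ℚ)))
      = fun j => (((aVec n + dRoot n ⟨0, by omega⟩) j : ℤ) : ℚ) := by
  funext j
  have hj := j.isLt
  have hsum := sum_dRoot_apply n (fun k => k ≤ n - 3) (by omega) j
  have hcast : (∑ i ∈ univ.filter (fun i : Fin n => (i : ℕ) ≤ n - 3),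
      fun j => ((dRoot n i j : ℤ) : ℚ)) j
      = (((∑ i ∈ univ.filter (fun i : Fin n => (i : ℕ) ≤ n - 3), dRoot n i) j : ℤ) : ℚ) := by
    rw [Finset.sum_apply, Finset.sum_apply]
    push_cast
    rfl
  simp only [Pi.add_apply, Pi.smul_apply, smul_eq_mul]
  rw [hcast, hsum, dRoot_apply_lt n _ j (show n-2+1 < n by omega),
    dRoot_apply_ge n _ j (show ¬ (n-1+1 < n) by omega),
    dRoot_apply_lt n _ j (show 0+1 < n by omega)]
  simp only [aVec]
  push_cast
  split_ifs <;> first | (exfalso; omega) | norm_num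

/-- Lemma 2.1(3): for `n ≥ 10`, the orthogonal complement `N` in `D_n` of the copy of
`A₂ ⊕ D₅` generated by `{d_n, d_{n−2}, d_{n−1}, d_{n−3}, d_{n−4}, d_{n−7}, d_{n−6}}`
is generated by `a = d_n + d_{n−1} + 2(d_{n−2} + ⋯ + d₂) + d₁`,
`d_{n−6} + 2d_{n−7} + 3d_{n−8}` and `d_{n−9}, …, d₁`; its root sublattice has
ℤ-basis `{a, d₁, …, d_{n−9}}` and is a (negative definite) copy of `D_{n−8}`,
and `2·[2]_{D_n} = a + d₁`. -/
theorem stmt2 (n : ℕ) (hn : 10 ≤ n)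
    -- the embedded copy of `A₂ ⊕ D₅`
    (S : Set (Fin n → ℤ))
    (hS : S = {dRoot n ⟨n - 1, by omega⟩, dRoot n ⟨n - 3, by omega⟩, dRoot n ⟨n - 2, by omega⟩,
        dRoot n ⟨n - 4, by omega⟩, dRoot n ⟨n - 5, by omega⟩, dRoot n ⟨n - 8, by omega⟩,
        dRoot n ⟨n - 7, by omega⟩})
    -- its orthogonal complement `N` in `D_n`
    (N : Set (Fin n → ℤ))
    (hN : N = {v | v ∈ Dlat n ∧ ∀ s ∈ S, bD n v s = 0})
    -- the root `a = d_n + d_{n−1} + 2(d_{n−2} + ⋯ + d₂) + d₁`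
    (a : Fin n → ℤ)
    (ha : a = dRoot n ⟨n - 1, by omega⟩ + dRoot n ⟨n - 2, by omega⟩
        + (2 : ℤ) • (∑ i ∈ univ.filter (fun i : Fin n => 1 ≤ (i : ℕ) ∧ (i : ℕ) ≤ n - 3),
            dRoot n i)
        + dRoot n ⟨0, by omega⟩)
    -- the root sublattice of `N`: the ℤ-span of the vectors `v ∈ N` with `b(v,v) = −2`
    (R : Submodule ℤ (Fin n → ℤ))
    (hR : R = Submodule.span ℤ {v | v ∈ N ∧ bD n v v = -2})
    -- the glue vector `[2]_{D_n} = Σ_{i=1}^{n−2} d_i + ½(d_{n−1} + d_n) ∈ ℚⁿ`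
    (glue2 : Fin n → ℚ)
    (hglue2 : glue2 = (∑ i ∈ univ.filter (fun i : Fin n => (i : ℕ) ≤ n - 3),
          fun j => ((dRoot n i j : ℤ) : ℚ))
        + (1 / 2 : ℚ) • ((fun j => ((dRoot n ⟨n - 2, by omega⟩ j : ℤ) : ℚ))
            + fun j => ((dRoot n ⟨n - 1, by omega⟩ j : ℤ) : ℚ))) :
    -- (i) generators of `N`
    N = (Submodule.span ℤ
        ({a, dRoot n ⟨n - 7, by omega⟩ + (2 : ℤ) • dRoot n ⟨n - 8, by omega⟩
            + (3 : ℤ) • dRoot n ⟨n - 9, by omega⟩}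
          ∪ {x | ∃ i : Fin n, (i : ℕ) ≤ n - 10 ∧ x = dRoot n i}) : Set (Fin n → ℤ))
    -- (ii) the root sublattice of `N` has ℤ-basis `{a, d₁, …, d_{n−9}}` …
    ∧ R = Submodule.span ℤ ({a} ∪ {x | ∃ i : Fin n, (i : ℕ) ≤ n - 10 ∧ x = dRoot n i})
    ∧ LinearIndependent ℤ (fun j : Fin (n - 8) =>
        if h : (j : ℕ) < n - 9 then dRoot n ⟨(j : ℕ), by omega⟩ else a)
    -- … and is the copy of `D_{n−8}` supported on the first `n−8` coordinates
    ∧ (R : Set (Fin n → ℤ))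
        = {v | (∀ i : Fin n, n - 8 ≤ (i : ℕ) → v i = 0) ∧ Even (∑ i, v i)}
    -- negative definiteness of the root sublattice
    ∧ (∀ v ∈ R, v ≠ 0 → bD n v v < 0)
    -- (iii) `2·[2]_{D_n} = a + d₁`
    ∧ (2 : ℚ) • glue2 = fun j => (((a + dRoot n ⟨0, by omega⟩) j : ℤ) : ℚ) := by
  have haa : a = aVec n := by rw [ha]; exact aExpr n hn
  have hNset : N = (Nsub n : Set (Fin n → ℤ)) := by
    rw [hN, hS]
    ext v
    exact N_mem_iff n hn v
  have hRspan : R = Submodule.span ℤ ({aVec n} ∪ genD n) := by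
    rw [hR]
    rw [hNset]
    exact span_roots n hn
  refine ⟨?_, ?_, ?_, ?_, ?_, ?_⟩
  · -- (i)
    rw [haa, wExpr n hn, hNset]
    ext v
    constructor
    · intro hv
      obtain ⟨h1, h2, h3⟩ := hv
      set c := vAt n v (n-8) with hc
      have hu : v + c • wVec n ∈ MD n := by
        refine ⟨fun i hi => ?_, ?_⟩
        · simp only [Pi.add_apply, Pi.smul_apply, smul_eq_mul]
          by_cases h5 : n - 5 ≤ (i:ℕ)
          · rw [h1 i h5, wVec_zero n hn i h5]
            ring
          · rw [h2 i hi (by omega), wVec_val n hn i hi (by omega)]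
            ring
        · simp only [Pi.add_apply, Pi.smul_apply, smul_eq_mul]
          rw [Finset.sum_add_distrib, ← Finset.mul_sum, sum_wVec n hn,
            mul_zero, add_zero]
          exact h3
      rw [← span_MD n hn] at hu
      have hsubset : ({aVec n} ∪ genD n : Set (Fin n → ℤ))
          ⊆ ({aVec n, wVec n} ∪ genD n : Set (Fin n → ℤ)) := by
        rintro x (hx | hx)
        · exact Or.inl (Or.inl hx)
        · exact Or.inr hx
      have hw : wVec n ∈ Submodule.span ℤ (({aVec n, wVec n} ∪ genD n : Set (Fin n → ℤ))) :=
        Submodule.subset_span (Or.inl (Or.inr rfl))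
      have hv' : v = (v + c • wVec n) - c • wVec n := by
        rw [add_sub_cancel_right]
      rw [hv']
      exact Submodule.sub_mem _ (Submodule.span_mono hsubset hu)
        (Submodule.smul_mem _ c hw)
    · intro hv
      have hle : Submodule.span ℤ (({aVec n, wVec n} ∪ genD n : Set (Fin n → ℤ)))
          ≤ Nsub n := by
        rw [Submodule.span_le]
        rintro x ((hx | hx) | ⟨i, hi, rfl⟩)
        · rw [hx]
          exact MD_le_Nsub n hn (aVec_mem_MD n hn)
        · rw [hx]
          exact wVec_mem_Nsub n hn
        · exact MD_le_Nsub n hn (dRoot_mem_MD n hn i hi)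
      exact hle hv
  · -- (ii)
    rw [haa]
    exact hRspan
  · -- linear independence
    simp only [haa]
    exact linIndepAux n hn
  · -- (iv)
    rw [hRspan, span_MD n hn]
    rfl
  · -- (v)
    intro v _ hv0
    exact bD_self_neg n v hv0
  · -- (iii)
    rw [hglue2, haa]
    exact glueExpr n hn
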